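/- The 4×4 partial symmetric matrix with entries A₁₁=2, A₁₂=3, A₁₃=0, A₂₂=6, A₂₃=3, A₂₄=0, A₃₃=6, A₃₄=3, A₄₄=2, and with the (1,4)-entry missing, is not CP-completable: for every real value t assigned to the (1,4) and (4,1) entries, the completed symmetric matrix is not completely positive. -/

import Mathlib

/-- A real `n × n` matrix is completely positive if `C = B * Bᵀ` for some
entrywise nonnegative matrix `B`. -/
def IsCP {n : ℕ} (C : Matrix (Fin n) (Fin n) ℝ) : Prop :=
  ∃ (m : ℕ) (B : Matrix (Fin n) (Fin m) ℝ), (∀ i j, 0 ≤ B i j) ∧ C = B * B.transpose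

/-- The partial matrix of (2.1) with the missing `(1,4)`-entry filled by `t`
is never completely positive, i.e. the partial matrix is not CP-completable. -/
theorem example_2_23_not_cp_completable :
    ∀ t : ℝ, ¬ IsCP !![2, 3, 0, t; 3, 6, 3, 0; 0, 3, 6, 3; t, 0, 3, 2] := by
  rintro t ⟨m, B, hB, hC⟩
  set C : Matrix (Fin 4) (Fin 4) ℝ := !![2, 3, 0, t; 3, 6, 3, 0; 0, 3, 6, 3; t, 0, 3, 2]
    with hCdef
  -- t is an entry of C = B * Bᵀ, hence nonnegative
  have ht : 0 ≤ t := by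
    have h1 : C 0 3 = ∑ k, B 0 k * B 3 k := by
      rw [hC]; simp [Matrix.mul_apply, Matrix.transpose_apply]
    have h0 : C 0 3 = t := by simp [hCdef]
    rw [h0] at h1
    rw [h1]
    exact Finset.sum_nonneg fun k _ => mul_nonneg (hB 0 k) (hB 3 k)
  -- C is positive semidefinite
  have hpsd : C.PosSemidef := by
    rw [hC]
    have := Matrix.posSemidef_self_mul_conjTranspose B
    rwa [Matrix.conjTranspose_eq_transpose_of_trivial] at this
  -- evaluate the quadratic form at x = (1, -1, 1, -1)
  have hq := hpsd.dotProduct_mulVec_nonneg ![1, -1, 1, -1]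
  have : dotProduct (star ![(1:ℝ), -1, 1, -1]) (C.mulVec ![1, -1, 1, -1])
      = -2 - 2 * t := by
    simp [hCdef, dotProduct, Matrix.mulVec, Fin.sum_univ_succ]
    ring
  rw [this] at hq
  linarith
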